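/- For all real x ≥ 1, -1/(12x²) ≤ Ψ(x) - log x + 1/(2x) ≤ 0, where Ψ = Γ'/Γ is the digamma function. -/

import Mathlib

open Real Set Filter Topology

namespace DigammaAux

/-- The step function: `g (y+1) - g y` where `g y = ψ y - log y + 1/(2y)`. -/
noncomputable def chi (y : ℝ) : ℝ :=
  1 / (2 * y) + 1 / (2 * (y + 1)) - (Real.log (y + 1) - Real.log y)

/-- The slack to the telescoping bound `(1/y² - 1/(y+1)²)/12`. -/
noncomputable def psi2 (y : ℝ) : ℝ :=
  (1 / y ^ 2 - 1 / (y + 1) ^ 2) / 12 - chi y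

lemma hasDerivAt_chi {y : ℝ} (hy : 0 < y) :
    HasDerivAt chi (-(1 / (2 * y ^ 2 * (y + 1) ^ 2))) y := by
  have hy1 : (0:ℝ) < y + 1 := by linarith
  have h1 : HasDerivAt (fun z : ℝ => (2 * z)⁻¹) (-(2 * 1) / (2 * y) ^ 2) y :=
    ((hasDerivAt_id y).const_mul 2).inv (by positivity)
  have h2 : HasDerivAt (fun z : ℝ => (2 * (z + 1))⁻¹) (-(2 * 1) / (2 * (y + 1)) ^ 2) y :=
    (((hasDerivAt_id y).add_const 1).const_mul 2).inv (by positivity)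
  have h3 : HasDerivAt (fun z : ℝ => Real.log (z + 1)) (1 / (y + 1)) y :=
    ((hasDerivAt_id y).add_const 1).log hy1.ne'
  have h4 : HasDerivAt Real.log y⁻¹ y := Real.hasDerivAt_log hy.ne'
  have H := (h1.add h2).sub (h3.sub h4)
  unfold chi
  simp only [one_div]
  exact H.congr_deriv (by field_simp; ring)

lemma hasDerivAt_psi2 {y : ℝ} (hy : 0 < y) :
    HasDerivAt psi2 (-(1 / (6 * y ^ 3 * (y + 1) ^ 3))) y := by
  have hy1 : (0:ℝ) < y + 1 := by linarith
  have h1 : HasDerivAt (fun z : ℝ => (z ^ 2)⁻¹) (-(2 * y ^ 1) / (y ^ 2) ^ 2) y :=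
    (hasDerivAt_pow 2 y).inv (by positivity)
  have h2 : HasDerivAt (fun z : ℝ => ((z + 1) ^ 2)⁻¹)
      (-(2 * (y + 1) ^ 1 * 1) / ((y + 1) ^ 2) ^ 2) y :=
    (((hasDerivAt_id y).add_const 1).pow 2).inv (pow_ne_zero 2 hy1.ne')
  have H := ((h1.sub h2).div_const 12).sub (hasDerivAt_chi hy)
  unfold psi2 chi
  simp only [one_div]
  have H' := H
  simp only [chi, one_div] at H'
  exact (H'.congr_deriv (show _ = -(6 * y ^ 3 * (y + 1) ^ 3)⁻¹ by field_simp; ring)).congr_of_eventuallyEq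
    (Filter.Eventually.of_forall fun z => by simp [chi])

lemma continuousAt_chi {y : ℝ} (hy : 0 < y) : ContinuousAt chi y :=
  (hasDerivAt_chi hy).differentiableAt.continuousAt

lemma log_diff_nonneg {z : ℝ} (hz : 0 < z) : 0 ≤ Real.log (z + 1) - Real.log z :=
  sub_nonneg.mpr (Real.log_le_log hz (by linarith))

lemma log_diff_le {z : ℝ} (hz : 0 < z) : Real.log (z + 1) - Real.log z ≤ 1 / z := by
  rw [← Real.log_div (by linarith) hz.ne']
  have h := Real.log_le_sub_one_of_pos (show (0:ℝ) < (z + 1) / z by positivity)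
  have : (z + 1) / z - 1 = 1 / z := by field_simp; ring
  linarith

lemma tendsto_chi : Tendsto chi atTop (𝓝 0) := by
  refine squeeze_zero_norm' (a := fun z : ℝ => 2 / z) ?_ ?_
  · filter_upwards [eventually_ge_atTop (1:ℝ)] with z hz
    have hz0 : (0:ℝ) < z := by linarith
    have h1 := log_diff_nonneg hz0
    have h2 := log_diff_le hz0
    have e1 : 1 / (2 * z) ≤ 1 / z := by
      apply div_le_div_of_nonneg_left one_pos.le hz0; linarith
    have e2 : 1 / (2 * (z + 1)) ≤ 1 / z := by
      apply div_le_div_of_nonneg_left one_pos.le hz0; linarith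
    have e3 : 0 < 1 / (2 * z) := by positivity
    have e4 : 0 < 1 / (2 * (z + 1)) := by positivity
    have e5 : 0 < 1 / z := by positivity
    have e6 : 2 / z = 1 / z + 1 / z := by ring
    rw [Real.norm_eq_abs, abs_le]
    unfold chi
    constructor
    · linarith
    · linarith
  · exact tendsto_const_nhds.div_atTop tendsto_id

lemma tendsto_psi2 : Tendsto psi2 atTop (𝓝 0) := by
  have h : Tendsto (fun z : ℝ => (1 / z ^ 2 - 1 / (z + 1) ^ 2) / 12) atTop (𝓝 0) := by
    have h1 : Tendsto (fun z : ℝ => 1 / z ^ 2) atTop (𝓝 0) :=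
      tendsto_const_nhds.div_atTop (tendsto_pow_atTop two_ne_zero)
    have h2 : Tendsto (fun z : ℝ => 1 / (z + 1) ^ 2) atTop (𝓝 0) :=
      tendsto_const_nhds.div_atTop
        ((tendsto_pow_atTop two_ne_zero).comp (tendsto_atTop_add_const_right _ 1 tendsto_id))
    simpa using (h1.sub h2).div_const 12
  have := h.sub tendsto_chi
  rw [sub_zero] at this
  exact this

lemma nonneg_of_antitone {f : ℝ → ℝ}
    (hder : ∀ y : ℝ, 0 < y → HasDerivAt f (-(1 / ((6 * y ^ 3 * (y + 1) ^ 3)))) y ∨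
      HasDerivAt f (-(1 / (2 * y ^ 2 * (y + 1) ^ 2))) y)
    (h0 : Tendsto f atTop (𝓝 0)) {y : ℝ} (hy : 1 ≤ y) : 0 ≤ f y := by
  have hant : AntitoneOn f (Ici 1) := by
    apply antitoneOn_of_deriv_nonpos (convex_Ici 1)
    · intro z hz
      have hz0 : (0:ℝ) < z := lt_of_lt_of_le one_pos hz
      rcases hder z hz0 with h | h <;>
        exact h.differentiableAt.continuousAt.continuousWithinAt
    · intro z hz
      rw [interior_Ici] at hz
      have hz0 : (0:ℝ) < z := lt_trans one_pos hz
      rcases hder z hz0 with h | h <;>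
        exact h.differentiableAt.differentiableWithinAt
    · intro z hz
      rw [interior_Ici] at hz
      have hz0 : (0:ℝ) < z := lt_trans one_pos hz
      rcases hder z hz0 with h | h <;> rw [h.deriv] <;> ·
        rw [neg_nonpos]; positivity
  refine le_of_tendsto h0 ?_
  filter_upwards [eventually_ge_atTop y] with z hz
  exact hant hy (hy.trans hz) hz

lemma chi_nonneg {y : ℝ} (hy : 1 ≤ y) : 0 ≤ chi y :=
  nonneg_of_antitone (fun z hz => Or.inr (hasDerivAt_chi hz)) tendsto_chi hy

lemma psi2_nonneg {y : ℝ} (hy : 1 ≤ y) : 0 ≤ psi2 y :=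
  nonneg_of_antitone (fun z hz => Or.inl (hasDerivAt_psi2 hz)) tendsto_psi2 hy

/-! ### Gamma function facts -/

lemma diff_logGamma {x : ℝ} (hx : 0 < x) :
    DifferentiableAt ℝ (fun y => Real.log (Real.Gamma y)) x := by
  have hne : ∀ m : ℕ, x ≠ -m := fun m =>
    (lt_of_le_of_lt (neg_nonpos.mpr m.cast_nonneg) hx).ne'
  exact (Real.differentiableAt_Gamma hne).log (Real.Gamma_ne_zero hne)

lemma psi_rec {x : ℝ} (hx : 0 < x) :
    deriv (fun y => Real.log (Real.Gamma y)) (x + 1)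
      = deriv (fun y => Real.log (Real.Gamma y)) x + 1 / x := by
  rw [← deriv_comp_add_const, one_div, ← Real.deriv_log,
    ← deriv_add (diff_logGamma hx) (Real.differentiableAt_log hx.ne')]
  apply Filter.EventuallyEq.deriv_eq
  filter_upwards [eventually_gt_nhds hx] with y hy
  rw [Real.Gamma_add_one hy.ne', Real.log_mul hy.ne' (Real.Gamma_pos_of_pos hy).ne']
  simp only [Pi.add_apply]; ring

lemma psi_le_log {x : ℝ} (hx : 0 < x) :
    deriv (fun y => Real.log (Real.Gamma y)) x ≤ Real.log x := by
  have h := Real.convexOn_log_Gamma.deriv_le_slope (mem_Ioi.mpr hx)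
    (mem_Ioi.mpr (by linarith : (0:ℝ) < x + 1)) (by linarith) (diff_logGamma hx)
  rw [slope_def_field, Function.comp_apply, Function.comp_apply,
    Real.Gamma_add_one hx.ne', Real.log_mul hx.ne' (Real.Gamma_pos_of_pos hx).ne',
    show x + 1 - x = (1:ℝ) by ring, div_one] at h
  simp only [Function.comp_def] at h
  linarith

lemma log_le_psi' {t : ℝ} (ht : 0 < t) :
    Real.log t ≤ deriv (fun y => Real.log (Real.Gamma y)) (t + 1) := by
  have h := Real.convexOn_log_Gamma.slope_le_deriv (mem_Ioi.mpr ht)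
    (mem_Ioi.mpr (by linarith : (0:ℝ) < t + 1)) (by linarith)
    (diff_logGamma (by linarith))
  rw [slope_def_field, Function.comp_apply, Function.comp_apply,
    Real.Gamma_add_one ht.ne',
    Real.log_mul ht.ne' (Real.Gamma_pos_of_pos ht).ne',
    show t + 1 - t = (1:ℝ) by ring, div_one] at h
  simp only [Function.comp_def] at h
  linarith

lemma log_le_psi {x : ℝ} (hx : 1 < x) :
    Real.log (x - 1) ≤ deriv (fun y => Real.log (Real.Gamma y)) x := by
  have h := log_le_psi' (t := x - 1) (by linarith)
  rwa [sub_add_cancel] at h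

/-- The quantity we are bounding. -/
noncomputable def G (x : ℝ) : ℝ :=
  deriv (fun y => Real.log (Real.Gamma y)) x - Real.log x + 1 / (2 * x)

lemma G_succ {y : ℝ} (hy : 0 < y) : G (y + 1) = G y + chi y := by
  unfold G chi
  rw [psi_rec hy]
  have h1 : y ≠ 0 := hy.ne'
  have h2 : y + 1 ≠ 0 := by positivity
  field_simp
  ring

lemma G_add_nat {x : ℝ} (hx : 1 ≤ x) (n : ℕ) :
    G (x + n) = G x + ∑ k ∈ Finset.range n, chi (x + k) := by
  induction n with
  | zero => simp
  | succ n ih =>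
    have hxy : (0:ℝ) < x + n := by positivity
    have : x + (n + 1 : ℕ) = (x + n) + 1 := by push_cast; ring
    rw [this, G_succ hxy, ih, Finset.sum_range_succ]
    ring

lemma G_abs_bound {z : ℝ} (hz : 1 < z) : |G z| ≤ 1 / (z - 1) := by
  have hz0 : (0:ℝ) < z := by linarith
  have hz1 : (0:ℝ) < z - 1 := by linarith
  have hub : G z ≤ 1 / (2 * z) := by
    have := psi_le_log hz0
    unfold G; linarith
  have hlb : -(1 / (z - 1)) ≤ G z := by
    have h1 := log_le_psi hz
    have h2 : Real.log z - Real.log (z - 1) ≤ 1 / (z - 1) := by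
      have := log_diff_le hz1
      rw [show z - 1 + 1 = z by ring] at this
      linarith
    have h3 : 0 < 1 / (2 * z) := by positivity
    unfold G; linarith
  rw [abs_le]
  refine ⟨hlb, hub.trans ?_⟩
  rw [div_le_div_iff₀ (by positivity) hz1]
  nlinarith

lemma tendsto_G_seq {x : ℝ} (hx : 1 ≤ x) :
    Tendsto (fun n : ℕ => G (x + n)) atTop (𝓝 0) := by
  refine squeeze_zero_norm' (a := fun n : ℕ => 1 / (x + n - 1)) ?_ ?_
  · filter_upwards [eventually_ge_atTop 1] with n hn
    have hn1 : (1:ℝ) ≤ (n:ℝ) := by exact_mod_cast hn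
    exact G_abs_bound (by linarith)
  · have h : Tendsto (fun n : ℕ => (n : ℝ) + (x - 1)) atTop atTop :=
      tendsto_atTop_add_const_right _ (x - 1) tendsto_natCast_atTop_atTop
    have := h.inv_tendsto_atTop
    have he : (fun n : ℕ => 1 / (x + n - 1)) = fun n : ℕ => ((n : ℝ) + (x - 1))⁻¹ := by
      funext n; rw [one_div]; ring_nf
    rw [he]; exact this

lemma sum_chi_nonneg {x : ℝ} (hx : 1 ≤ x) (n : ℕ) :
    0 ≤ ∑ k ∈ Finset.range n, chi (x + k) := by
  apply Finset.sum_nonneg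
  intro k _
  have hk0 : (0:ℝ) ≤ (k:ℝ) := k.cast_nonneg
  exact chi_nonneg (by linarith)

lemma sum_chi_le {x : ℝ} (hx : 1 ≤ x) (n : ℕ) :
    ∑ k ∈ Finset.range n, chi (x + k) ≤ 1 / (12 * x ^ 2) := by
  have hx0 : (0:ℝ) < x := by linarith
  have key : ∀ k ∈ Finset.range n,
      chi (x + k) ≤ 1 / (x + (k:ℝ)) ^ 2 / 12 - 1 / (x + ((k:ℕ) + 1 : ℕ)) ^ 2 / 12 := by
    intro k _
    have hk0 : (0:ℝ) ≤ (k:ℝ) := k.cast_nonneg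
    have hxk : (1:ℝ) ≤ x + k := by linarith
    have h := psi2_nonneg hxk
    unfold psi2 at h
    have hc : (x + ((k:ℕ) + 1 : ℕ) : ℝ) = (x + k) + 1 := by push_cast; ring
    rw [hc]
    linarith
  have htel := Finset.sum_range_sub' (fun k : ℕ => 1 / (x + (k:ℝ)) ^ 2 / 12) n
  have hsum := Finset.sum_le_sum key
  rw [htel] at hsum
  have h1 : (0:ℝ) < 1 / (x + n) ^ 2 / 12 := by positivity
  have h2 : 1 / (x + ((0:ℕ):ℝ)) ^ 2 / 12 = 1 / (12 * x ^ 2) := by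
    push_cast; rw [add_zero]; ring
  rw [h2] at hsum
  linarith

end DigammaAux

theorem digamma_bounds (x : ℝ) (hx : 1 ≤ x) :
    -(1 / (12 * x ^ 2)) ≤ deriv (fun y => Real.log (Real.Gamma y)) x
        - Real.log x + 1 / (2 * x) ∧
      deriv (fun y => Real.log (Real.Gamma y)) x - Real.log x + 1 / (2 * x) ≤ 0 := by
  open DigammaAux in
  have hlim := DigammaAux.tendsto_G_seq hx
  have key := fun n => DigammaAux.G_add_nat hx n
  constructor
  · have hle : ∀ n : ℕ, DigammaAux.G (x + n) - 1 / (12 * x ^ 2) ≤ DigammaAux.G x := by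
      intro n
      have := DigammaAux.sum_chi_le hx n
      rw [key n] at *
      linarith
    have h := le_of_tendsto (hlim.sub (tendsto_const_nhds (x := 1 / (12 * x ^ 2))))
      (Filter.Eventually.of_forall hle)
    rw [zero_sub] at h
    exact h
  · have hge : ∀ n : ℕ, DigammaAux.G x ≤ DigammaAux.G (x + n) := by
      intro n
      have := DigammaAux.sum_chi_nonneg hx n
      rw [key n]
      linarith
    exact ge_of_tendsto hlim (Filter.Eventually.of_forall hge)
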